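/- Let C ⊆ L⁰₊ be convex and let g ∈ C be strictly positive on C. Then g is a numéraire of C if and only if there exists a σ-finite measure μ on (Ω,F), equivalent to P, such that ∫ g dμ = sup_{f∈C} ∫ f dμ < ∞. -/

import Mathlib

open MeasureTheory Filter Set
open scoped ENNReal NNReal

noncomputable section

variable {Ω : Type*} [MeasurableSpace Ω]

/-- The nonnegative orthant `L⁰₊` of `L⁰`: (a.e. classes of) random variables that are
a.e. nonnegative.  We work with representatives, requiring a.e.-measurability. -/
def L0plus (P : Measure Ω) : Set (Ω → ℝ) :=
  {f | AEMeasurable f P ∧ 0 ≤ᵐ[P] f}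

/-- A set `A ⊆ L⁰₊` is bounded (in probability) if `lim_{ℓ→∞} sup_{f∈A} P[f>ℓ] = 0`. -/
def BoundedInProb (P : Measure Ω) (A : Set (Ω → ℝ)) : Prop :=
  Tendsto (fun ℓ : ℝ => ⨆ f ∈ A, P {ω | ℓ < f ω}) atTop (nhds 0)

/-- A set `K` is closed in probability: it contains every (a.e.-measurable) limit in
measure of sequences from `K`.  (Convergence in probability is metrizable, so sequential
closedness is closedness.) -/
def ClosedInProb (P : Measure Ω) (K : Set (Ω → ℝ)) : Prop :=
  ∀ (f : ℕ → Ω → ℝ) (g : Ω → ℝ), (∀ n, f n ∈ K) → AEMeasurable g P →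
    TendstoInMeasure P f atTop g → g ∈ K

/-- `g` is strictly positive on `C`: `P[f > 0, g = 0] = 0` for every `f ∈ C`. -/
def StrictlyPositiveOn (P : Measure Ω) (C : Set (Ω → ℝ)) (g : Ω → ℝ) : Prop :=
  ∀ f ∈ C, P ({ω | 0 < f ω} ∩ {ω | g ω = 0}) = 0

/-- `Q` is a probability measure equivalent to `P`. -/
def EquivProb (P Q : Measure Ω) : Prop :=
  IsProbabilityMeasure Q ∧ Q ≪ P ∧ P ≪ Q

/-- `g` is a numéraire of `C`: it is strictly positive on `C` and there is an equivalent
probability `Q` with `E_Q[(f/g)·1_{g>0}] ≤ Q[g>0]` for all `f ∈ C`. -/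
def IsNumeraire (P : Measure Ω) (C : Set (Ω → ℝ)) (g : Ω → ℝ) : Prop :=
  StrictlyPositiveOn P C g ∧
    ∃ Q : Measure Ω, EquivProb P Q ∧
      ∀ f ∈ C, (∫⁻ ω in {ω | 0 < g ω}, ENNReal.ofReal (f ω / g ω) ∂Q) ≤ Q {ω | 0 < g ω}

/-- The class `CS_g(C)` of subsets `K` of `L⁰₊` with (CS1) `C ⊆ K`, (CS2) `K` convex and
closed in probability, (CS3) `f ∈ K`, `δ ≥ 0`, `(1+δ)f − δg ∈ L⁰₊` imply `(1+δ)f − δg ∈ K`. -/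
def CSclass (P : Measure Ω) (C : Set (Ω → ℝ)) (g : Ω → ℝ) : Set (Set (Ω → ℝ)) :=
  {K | K ⊆ L0plus P ∧ C ⊆ K ∧ Convex ℝ K ∧ ClosedInProb P K ∧
    ∀ f ∈ K, ∀ δ : ℝ, 0 ≤ δ →
      (fun ω => (1 + δ) * f ω - δ * g ω) ∈ L0plus P →
      (fun ω => (1 + δ) * f ω - δ * g ω) ∈ K}

/-- `cs_g(C)`, the smallest element of `CS_g(C)`. -/
def csSet (P : Measure Ω) (C : Set (Ω → ℝ)) (g : Ω → ℝ) : Set (Ω → ℝ) :=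
  ⋂ K ∈ CSclass P C g, K

/-- The solid hull of `K` in `L⁰₊`. -/
def SolidHull (P : Measure Ω) (K : Set (Ω → ℝ)) : Set (Ω → ℝ) :=
  {f | f ∈ L0plus P ∧ ∃ h ∈ K, f ≤ᵐ[P] h}

/-- `L∞`: essentially bounded (a.e.-measurable) random variables. -/
def Linf (P : Measure Ω) : Set (Ω → ℝ) :=
  {f | AEMeasurable f P ∧ ∃ c : ℝ, ∀ᵐ ω ∂P, |f ω| ≤ c}

/-- `L∞₊ = L⁰₊ ∩ L∞`. -/
def LinfPlus (P : Measure Ω) : Set (Ω → ℝ) := L0plus P ∩ Linf P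

/-- `L` is solid: `0 ≤ u ≤ h` a.s. with `h ∈ L` implies `u ∈ L`. -/
def IsSolid (P : Measure Ω) (L : Set (Ω → ℝ)) : Prop :=
  ∀ u : Ω → ℝ, AEMeasurable u P → 0 ≤ᵐ[P] u → (∃ h ∈ L, u ≤ᵐ[P] h) → u ∈ L

/-- `A_α := α (L − 1) = { α(f − 1) : f ∈ L }`. -/
def Aset (L : Set (Ω → ℝ)) (α : ℝ) : Set (Ω → ℝ) :=
  (fun f : Ω → ℝ => fun ω => α * (f ω - 1)) '' L

/-- `J := ⋃_{α ≥ 0} A_α`. -/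
def Jset (L : Set (Ω → ℝ)) : Set (Ω → ℝ) := ⋃ α ∈ Ici (0 : ℝ), Aset L α

/-- The weak* topology on (representatives of) `L∞`, viewed as the dual of `L¹(P)`:
the topology induced by the maps `φ ↦ ∫ φ·u dP` for integrable `u`. -/
def weakStarTop (P : Measure Ω) : TopologicalSpace (Ω → ℝ) :=
  ⨅ (u : Ω → ℝ) (_ : Integrable u P),
    TopologicalSpace.induced (fun φ : Ω → ℝ => ∫ ω, φ ω * u ω ∂P) inferInstance

/-- The witness set `K := { h ∈ L⁰₊ : P[h>0, g=0]=0 and E_Q[(h/g)·1_{g>0}] ≤ Q[g>0] }`. -/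
def Kwitness (P Q : Measure Ω) (g : Ω → ℝ) : Set (Ω → ℝ) :=
  {h | h ∈ L0plus P ∧ P ({ω | 0 < h ω} ∩ {ω | g ω = 0}) = 0 ∧
    (∫⁻ ω in {ω | 0 < g ω}, ENNReal.ofReal (h ω / g ω) ∂Q) ≤ Q {ω | 0 < g ω}}

/-- The set `C` of the example: outcomes `1 − θ₁ + (θ₁ + θ₂)ξ` for `θ` in the constraint
set `Θ = { θ ∈ ℝ₊² : θ₂ ≤ √θ₁ ≤ 1 }`. -/
def exampleC (ξ : Ω → ℝ) : Set (Ω → ℝ) :=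
  {f | ∃ θ : ℝ × ℝ, (0 ≤ θ.1 ∧ 0 ≤ θ.2 ∧ θ.2 ≤ Real.sqrt θ.1 ∧ Real.sqrt θ.1 ≤ 1) ∧
    f = fun ω => 1 - θ.1 + (θ.1 + θ.2) * ξ ω}


section Aux

open scoped ENNReal NNReal

variable {P : Measure Ω}

private lemma setOf_pos_aeeq {μ : Measure Ω} {g g' : Ω → ℝ} (h : g =ᵐ[μ] g') :
    {ω | 0 < g ω} =ᵐ[μ] {ω | 0 < g' ω} := by
  refine Filter.eventuallyEq_set.mpr ?_
  filter_upwards [h] with ω hω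
  simp [Set.mem_setOf_eq, hω]

end Aux

/-- `g` is a numéraire of `C` iff there exists a σ-finite measure `μ`
equivalent to `P` with `∫ g dμ = sup_{f∈C} ∫ f dμ < ∞`. -/
theorem numeraire_iff_sigmaFinite_supporting_measure
    (P : Measure Ω) [IsProbabilityMeasure P]
    (C : Set (Ω → ℝ)) (hC : C ⊆ L0plus P) (hconv : Convex ℝ C)
    (g : Ω → ℝ) (hg : g ∈ C) (hsp : StrictlyPositiveOn P C g) :
    IsNumeraire P C g ↔
      ∃ μ : Measure Ω, SigmaFinite μ ∧ μ ≪ P ∧ P ≪ μ ∧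
        (∫⁻ ω, ENNReal.ofReal (g ω) ∂μ) = (⨆ f ∈ C, ∫⁻ ω, ENNReal.ofReal (f ω) ∂μ) ∧
        (⨆ f ∈ C, ∫⁻ ω, ENNReal.ofReal (f ω) ∂μ) < ⊤ := by
  constructor
  · rintro ⟨-, Q, ⟨hQprob, hQP, hPQ⟩, hineq⟩
    haveI := hQprob
    have hgQ : AEMeasurable g Q := (hC hg).1.mono_ac hQP
    obtain ⟨g', hg'm, hgg'⟩ := hgQ
    set S : Set Ω := {ω | 0 < g' ω} with hSdef
    have hSmeas : MeasurableSet S := measurableSet_lt measurable_const hg'm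
    set W : Ω → ℝ≥0∞ := fun ω => if 0 < g' ω then ENNReal.ofReal (g' ω)⁻¹ else 1 with hWdef
    have hWmeas : Measurable W :=
      Measurable.ite hSmeas (ENNReal.measurable_ofReal.comp hg'm.inv) measurable_const
    have hWne0 : ∀ ω, W ω ≠ 0 := by
      intro ω
      by_cases h : 0 < g' ω
      · simp only [hWdef, if_pos h]
        exact (ENNReal.ofReal_pos.mpr (inv_pos.mpr h)).ne'
      · simp [hWdef, h]
    have hWlt : ∀ᵐ ω ∂Q, W ω < ⊤ := by
      refine ae_of_all _ fun ω => ?_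
      by_cases h : 0 < g' ω <;> simp [hWdef, h, ENNReal.ofReal_lt_top]
    set μ : Measure Ω := Q.withDensity W with hμdef
    have hμQ : μ ≪ Q := withDensity_absolutelyContinuous _ _
    have hQμ : Q ≪ μ :=
      withDensity_absolutelyContinuous' hWmeas.aemeasurable (ae_of_all _ hWne0)
    -- key computation
    have key1 : ∀ f ∈ C, (∫⁻ ω, ENNReal.ofReal (f ω) ∂μ)
        = ∫⁻ ω in S, ENNReal.ofReal (f ω / g' ω) ∂Q := by
      intro f hf
      rw [hμdef, lintegral_withDensity_eq_lintegral_mul_non_measurable₀ _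
        hWmeas.aemeasurable hWlt, ← lintegral_indicator hSmeas _]
      refine lintegral_congr_ae ?_
      have hf0 : 0 ≤ᵐ[Q] f := ((hC hf).2).filter_mono hQP.ae_le
      have hg0 : 0 ≤ᵐ[Q] g := ((hC hg).2).filter_mono hQP.ae_le
      have hspf : ∀ᵐ ω ∂Q, ω ∉ ({ω | 0 < f ω} ∩ {ω | g ω = 0}) :=
        measure_eq_zero_iff_ae_notMem.mp (hQP (hsp f hf))
      filter_upwards [hgg', hf0, hg0, hspf] with ω hgω hfω hg0ω hspω
      by_cases h : 0 < g' ω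
      · have hmem : ω ∈ S := h
        simp only [Pi.mul_apply, hWdef, if_pos h, Set.indicator_of_mem hmem]
        rw [← ENNReal.ofReal_mul (le_of_lt (inv_pos.mpr h)), div_eq_mul_inv, mul_comm]
      · have hgz : g ω = 0 := le_antisymm (hgω ▸ not_lt.mp h) hg0ω
        have hfz : f ω = 0 := by
          by_contra hne
          exact hspω ⟨lt_of_le_of_ne hfω (Ne.symm hne), hgz⟩
        have hnmem : ω ∉ S := h
        simp [Pi.mul_apply, hfz, Set.indicator_of_notMem hnmem]
    have hsetQ : {ω | 0 < g ω} =ᵐ[Q] S := setOf_pos_aeeq hgg'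
    have key2 : ∀ f : Ω → ℝ, (∫⁻ ω in S, ENNReal.ofReal (f ω / g' ω) ∂Q)
        = ∫⁻ ω in {ω | 0 < g ω}, ENNReal.ofReal (f ω / g ω) ∂Q := by
      intro f
      rw [Measure.restrict_congr_set hsetQ.symm]
      refine lintegral_congr_ae (ae_restrict_of_ae ?_)
      filter_upwards [hgg'] with ω hω
      rw [hω]
    have hgval : (∫⁻ ω, ENNReal.ofReal (g ω) ∂μ) = Q {ω | 0 < g ω} := by
      rw [key1 g hg, measure_congr hsetQ, ← setLIntegral_one]
      refine lintegral_congr_ae ((ae_restrict_iff' hSmeas).mpr ?_)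
      filter_upwards [hgg'] with ω hω hmem
      rw [hω, div_self (ne_of_gt hmem), ENNReal.ofReal_one]
    have hsup_le : (⨆ f ∈ C, ∫⁻ ω, ENNReal.ofReal (f ω) ∂μ) ≤ Q {ω | 0 < g ω} := by
      refine iSup₂_le fun f hf => ?_
      rw [key1 f hf, key2 f]
      exact hineq f hf
    have hle_sup : Q {ω | 0 < g ω} ≤ ⨆ f ∈ C, ∫⁻ ω, ENNReal.ofReal (f ω) ∂μ :=
      hgval ▸ le_biSup (fun f => ∫⁻ ω, ENNReal.ofReal (f ω) ∂μ) hg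
    refine ⟨μ, ?_, hμQ.trans hQP, hPQ.trans hQμ, ?_, ?_⟩
    · exact SigmaFinite.withDensity_of_ne_top
        (hWlt.mono fun ω h => h.ne)
    · exact hgval.trans (le_antisymm hle_sup hsup_le)
    · exact lt_of_le_of_lt hsup_le (measure_lt_top Q _)
  · rintro ⟨μ, hσ, hμP, hPμ, heq, hlt⟩
    haveI := hσ
    refine ⟨hsp, ?_⟩
    have hgμ : AEMeasurable g μ := (hC hg).1.mono_ac hμP
    obtain ⟨g', hg'm, hgg'⟩ := hgμ
    set S : Set Ω := {ω | 0 < g' ω} with hSdef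
    have hSmeas : MeasurableSet S := measurableSet_lt measurable_const hg'm
    obtain ⟨u, hupos, humeas, huint⟩ :=
      exists_pos_lintegral_lt_of_sigmaFinite μ (ε := 1) one_ne_zero
    set H : Ω → ℝ≥0∞ := fun ω => if 0 < g' ω then ENNReal.ofReal (g' ω) else (u ω : ℝ≥0∞)
      with hHdef
    have hHmeas : Measurable H :=
      Measurable.ite hSmeas (ENNReal.measurable_ofReal.comp hg'm)
        humeas.coe_nnreal_ennreal
    have hHne0 : ∀ ω, H ω ≠ 0 := by
      intro ω
      by_cases h : 0 < g' ω
      · simp only [hHdef, if_pos h]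
        exact (ENNReal.ofReal_pos.mpr h).ne'
      · simp only [hHdef, if_neg h]
        exact_mod_cast (hupos ω).ne'
    have hHlt : ∀ ω, H ω < ⊤ := by
      intro ω
      by_cases h : 0 < g' ω <;> simp [hHdef, h, ENNReal.ofReal_lt_top]
    set ν : Measure Ω := μ.withDensity H with hνdef
    have hνμ : ν ≪ μ := withDensity_absolutelyContinuous _ _
    have hμν : μ ≪ ν :=
      withDensity_absolutelyContinuous' hHmeas.aemeasurable (ae_of_all _ hHne0)
    have hg'int : (∫⁻ ω, ENNReal.ofReal (g' ω) ∂μ) = ∫⁻ ω, ENNReal.ofReal (g ω) ∂μ :=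
      lintegral_congr_ae (hgg'.mono fun ω h => by simp [h])
    have hgint : (∫⁻ ω, ENNReal.ofReal (g ω) ∂μ) < ⊤ := heq ▸ hlt
    have hνfin : ν Set.univ < ⊤ := by
      rw [hνdef, withDensity_apply _ MeasurableSet.univ, Measure.restrict_univ]
      calc (∫⁻ ω, H ω ∂μ) ≤ ∫⁻ ω, (ENNReal.ofReal (g' ω) + (u ω : ℝ≥0∞)) ∂μ := by
            refine lintegral_mono fun ω => ?_
            by_cases h : 0 < g' ω
            · simp only [hHdef, if_pos h]; exact le_self_add
            · simp only [hHdef, if_neg h]; exact le_add_self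
        _ = (∫⁻ ω, ENNReal.ofReal (g' ω) ∂μ) + ∫⁻ ω, (u ω : ℝ≥0∞) ∂μ :=
            lintegral_add_left (ENNReal.measurable_ofReal.comp hg'm) _
        _ < ⊤ := ENNReal.add_lt_top.mpr ⟨hg'int ▸ hgint, huint.trans ENNReal.one_lt_top⟩
    have hν0 : ν Set.univ ≠ 0 := by
      intro h0
      have hμ0 : μ Set.univ = 0 := hμν h0
      have hP0 : P Set.univ = 0 := hPμ hμ0
      simp at hP0
    set c : ℝ≥0∞ := (ν Set.univ)⁻¹ with hcdef
    have hc0 : c ≠ 0 := ENNReal.inv_ne_zero.mpr hνfin.ne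
    have hctop : c ≠ ⊤ := ENNReal.inv_ne_top.mpr hν0
    have hνc : ν ≪ c • ν := by
      intro s hs
      rw [Measure.smul_apply, smul_eq_mul, mul_eq_zero] at hs
      exact hs.resolve_left hc0
    have hsetν : {ω | 0 < g ω} =ᵐ[ν] S :=
      (setOf_pos_aeeq hgg').filter_mono hνμ.ae_le
    have hνSval : ν S = ∫⁻ ω, ENNReal.ofReal (g ω) ∂μ := by
      rw [hνdef, withDensity_apply _ hSmeas, ← hg'int,
        ← lintegral_add_compl (fun ω => ENNReal.ofReal (g' ω)) hSmeas]
      have hcompl : (∫⁻ ω in Sᶜ, ENNReal.ofReal (g' ω) ∂μ) = 0 := by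
        rw [setLIntegral_congr_fun_ae hSmeas.compl
          (ae_of_all _ (fun ω (hω : ω ∈ Sᶜ) => ?_)), lintegral_zero]
        exact ENNReal.ofReal_eq_zero.mpr (not_lt.mp hω)
      rw [hcompl, add_zero]
      refine setLIntegral_congr_fun_ae hSmeas (ae_of_all _ fun ω hω => ?_)
      simp only [hHdef, if_pos (show 0 < g' ω from hω)]
    refine ⟨c • ν, ⟨⟨?_⟩, ?_, ?_⟩, ?_⟩
    · rw [Measure.smul_apply, smul_eq_mul, hcdef, ENNReal.inv_mul_cancel hν0 hνfin.ne]
    · intro s hs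
      have : ν s = 0 := (hνμ.trans hμP) hs
      rw [Measure.smul_apply, smul_eq_mul, this, mul_zero]
    · exact (hPμ.trans hμν).trans hνc
    · intro f hf
      have hRHS : (c • ν) {ω | 0 < g ω} = c * ∫⁻ ω, ENNReal.ofReal (g ω) ∂μ := by
        rw [Measure.smul_apply, smul_eq_mul, measure_congr hsetν, hνSval]
      rw [hRHS]
      have hLHS : (∫⁻ ω in {ω | 0 < g ω}, ENNReal.ofReal (f ω / g ω) ∂(c • ν))
          = c * ∫⁻ ω in S, ENNReal.ofReal (f ω / g' ω) ∂ν := by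
        rw [setLIntegral_smul_measure]
        congr 1
        rw [Measure.restrict_congr_set hsetν]
        refine lintegral_congr_ae (ae_restrict_of_ae ?_)
        filter_upwards [hνμ.ae_eq hgg'] with ω hω
        rw [hω]
      rw [hLHS]
      refine mul_le_mul_right ?_ c
      have hstep : (∫⁻ ω in S, ENNReal.ofReal (f ω / g' ω) ∂ν)
          = ∫⁻ ω in S, ENNReal.ofReal (f ω) ∂μ := by
        rw [hνdef, setLIntegral_withDensity_eq_setLIntegral_mul_non_measurable _ hHmeas _
          hSmeas (ae_of_all _ fun ω => hHlt ω)]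
        refine lintegral_congr_ae ((ae_restrict_iff' hSmeas).mpr (ae_of_all _ fun ω hω => ?_))
        have hpos : 0 < g' ω := hω
        simp only [Pi.mul_apply, hHdef, if_pos hpos]
        rw [← ENNReal.ofReal_mul hpos.le, mul_div_assoc', mul_comm,
          mul_div_assoc, div_self (ne_of_gt hpos), mul_one]
      rw [hstep]
      calc (∫⁻ ω in S, ENNReal.ofReal (f ω) ∂μ)
          ≤ ∫⁻ ω, ENNReal.ofReal (f ω) ∂μ := setLIntegral_le_lintegral _ _
        _ ≤ ⨆ f ∈ C, ∫⁻ ω, ENNReal.ofReal (f ω) ∂μ :=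
            le_biSup (fun f => ∫⁻ ω, ENNReal.ofReal (f ω) ∂μ) hf
        _ = ∫⁻ ω, ENNReal.ofReal (g ω) ∂μ := heq.symm

end
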